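/- arXiv:0903.3100 — 7 statements merged into one kernel-verified Lean document; each statement's English description precedes it below -/
import Mathlib

section
/- The function f(N) = N · ln(1 - exp(-βN)) defined for N > 0 (with β > 0 fixed) attains its unique minimum at N = (ln 2)/β. -/
open Real

-- psi positivity: u log u < (1-u) log (1-u) for u in (0,1/2)
lemma psi_pos (u : ℝ) (h0 : 0 < u) (h : u < 1/2) :
    u * Real.log u < (1 - u) * Real.log (1 - u) := by
  have h1 : (0:ℝ) < 1 - u := by linarith
  have hdivne : u / (1 - u) ≠ 1 := by
    intro hh
    rw [div_eq_one_iff_eq (ne_of_gt h1)] at hh; linarith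
  have hA := Real.log_lt_sub_one_of_pos (div_pos h0 h1) hdivne
  rw [Real.log_div (ne_of_gt h0) (ne_of_gt h1)] at hA
  have hinvne : (1:ℝ) / (1 - u) ≠ 1 := by
    intro hh
    rw [div_eq_one_iff_eq (ne_of_gt h1)] at hh; linarith
  have hB := Real.log_lt_sub_one_of_pos (by positivity) hinvne
  rw [Real.log_div one_ne_zero (ne_of_gt h1), Real.log_one] at hB
  set a := Real.log u
  set b := Real.log (1 - u)
  -- clear denominators
  have hA2 : (a - b) * (1 - u) < u - (1 - u) := by
    have := mul_lt_mul_of_pos_right hA h1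
    have he : (u / (1 - u) - 1) * (1 - u) = u - (1 - u) := by
      field_simp
    linarith [he ▸ this]
  have hB2 : (0 - b) * (1 - u) < 1 - (1 - u) := by
    have := mul_lt_mul_of_pos_right hB h1
    have he : (1 / (1 - u) - 1) * (1 - u) = 1 - (1 - u) := by
      field_simp
    linarith [he ▸ this]
  nlinarith [mul_lt_mul_of_pos_left hA2 h0,
    mul_lt_mul_of_pos_left hB2 (show (0:ℝ) < 1 - 2*u by linarith), h1, h0]

lemma F_mono : StrictMonoOn (fun u : ℝ => Real.log u * Real.log (1 - u))
    (Set.Ioc 0 (1/2 : ℝ)) := by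
  apply strictMonoOn_of_deriv_pos (convex_Ioc _ _)
  · intro x hx
    have hx0 : (0:ℝ) < x := hx.1
    have h1x : (0:ℝ) < 1 - x := by have := hx.2; linarith
    exact ((Real.continuousAt_log (ne_of_gt hx0)).mul
      ((Real.continuousAt_log (ne_of_gt h1x)).comp
        ((continuous_const.sub continuous_id).continuousAt))).continuousWithinAt
  · intro x hx
    rw [interior_Ioc] at hx
    obtain ⟨hx0, hx2⟩ := hx
    have h1x : (0:ℝ) < 1 - x := by linarith
    have d2 : HasDerivAt (fun u : ℝ => 1 - u) (-1) x := by
      simpa using (hasDerivAt_id x).const_sub 1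
    have d3 : HasDerivAt (fun u : ℝ => Real.log (1 - u)) ((1-x)⁻¹ * (-1)) x :=
      (Real.hasDerivAt_log (ne_of_gt h1x)).comp x d2
    have hd : HasDerivAt (fun u : ℝ => Real.log u * Real.log (1 - u))
        (x⁻¹ * Real.log (1 - x) + Real.log x * ((1-x)⁻¹ * (-1))) x :=
      (Real.hasDerivAt_log (ne_of_gt hx0)).mul d3
    rw [hd.deriv]
    have hpsi := psi_pos x hx0 hx2
    have he : x⁻¹ * Real.log (1 - x) + Real.log x * ((1-x)⁻¹ * (-1))
        = ((1 - x) * Real.log (1 - x) - x * Real.log x) / (x * (1 - x)) := by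
      field_simp
      ring
    rw [he]
    apply div_pos (by linarith) (by positivity)

lemma key (u : ℝ) (h0 : 0 < u) (h1 : u < 1) (hne : u ≠ 1/2) :
    Real.log u * Real.log (1 - u) < Real.log 2 * Real.log 2 := by
  have hhalf : Real.log (1/2 : ℝ) = -Real.log 2 := by
    rw [one_div, Real.log_inv]
  have main : ∀ v : ℝ, 0 < v → v < 1/2 →
      Real.log v * Real.log (1 - v) < Real.log 2 * Real.log 2 := by
    intro v hv0 hv2
    have := F_mono (Set.mem_Ioc.mpr ⟨hv0, le_of_lt hv2⟩)
      (Set.mem_Ioc.mpr ⟨by norm_num, le_refl _⟩) hv2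
    simp only at this
    rw [show (1:ℝ) - 1/2 = 1/2 by norm_num, hhalf, neg_mul_neg] at this
    exact this
  rcases lt_or_gt_of_ne hne with hlt | hgt
  · exact main u h0 hlt
  · have h1u0 : 0 < 1 - u := by linarith
    have h1u2 : 1 - u < 1/2 := by linarith
    have := main (1 - u) h1u0 h1u2
    have he : (1 : ℝ) - (1 - u) = u := by ring
    rw [he] at this
    linarith [this, mul_comm (Real.log (1 - u)) (Real.log u)]

/-- The function `f(N) = N · ln(1 - exp(-βN))` on `N > 0` (with `β > 0`) attains its
unique minimum at `N = (ln 2)/β`. -/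
theorem stmt2 (β : ℝ) (hβ : 0 < β) :
    ∀ N : ℝ, 0 < N → N ≠ Real.log 2 / β →
      (Real.log 2 / β) * Real.log (1 - Real.exp (-β * (Real.log 2 / β))) <
        N * Real.log (1 - Real.exp (-β * N)) := by
  intro N hN hNe
  have hβN : 0 < β * N := mul_pos hβ hN
  set u := Real.exp (-β * N) with hu
  have hu0 : 0 < u := Real.exp_pos _
  have hu1 : u < 1 := by
    rw [hu]; exact Real.exp_lt_one_iff.mpr (by linarith)
  have hlogu : Real.log u = -β * N := Real.log_exp _
  have hune : u ≠ 1/2 := by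
    intro hh
    apply hNe
    have h2 : Real.log u = -Real.log 2 := by
      rw [hh, one_div, Real.log_inv]
    rw [hlogu] at h2
    rw [eq_div_iff (ne_of_gt hβ)]
    linarith
  -- LHS simplification
  have hL1 : -β * (Real.log 2 / β) = -Real.log 2 := by
    field_simp
  have hL2 : Real.exp (-Real.log 2) = 1/2 := by
    rw [Real.exp_neg, Real.exp_log (by norm_num : (0:ℝ) < 2)]; norm_num
  have hL : (Real.log 2 / β) * Real.log (1 - Real.exp (-β * (Real.log 2 / β)))
      = -(Real.log 2 * Real.log 2) / β := by
    rw [hL1, hL2, show (1:ℝ) - 1/2 = 1/2 by norm_num, one_div, Real.log_inv]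
    ring
  have hNu : N = -Real.log u / β := by
    rw [hlogu]
    field_simp
  have hk := key u hu0 hu1 hune
  rw [hL, hNu]
  have : -Real.log u / β * Real.log (1 - u)
      = -(Real.log u * Real.log (1 - u)) / β := by ring
  rw [this]
  apply div_lt_div_of_pos_right ?_ hβ
  linarith
end

section
/- Define φ(λ) = Σ_{i=1}^P (τ_i/T) ⌊ln(T ε_i/(τ_i λ))⌋⁺ - 1 for λ > 0, where ⌊x⌋⁺ = max(x,0). Then φ is continuous, strictly decreasing on the region where it is positive, satisfies φ(λ) → +∞ as λ → 0⁺ and φ(λ) = -1 for λ ≥ max_i T ε_i/τ_i, and hence the equation φ(λ) = 0 has a unique solution λ* > 0. -/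
open Real Filter

/-- Properties of the water-filling function
`φ(λ) = Σ_i (τ_i/T) ⌊ln(T ε_i/(τ_i λ))⌋⁺ - 1`: continuity on `(0,∞)`, strict decrease
on the region where it is positive, divergence to `+∞` at `0⁺`, value `-1` for
`λ ≥ max_i T ε_i/τ_i`, and existence and uniqueness of a positive zero. -/
theorem stmt6 (P : ℕ) (hP : 1 ≤ P) (T : ℝ) (hT : 0 < T)
    (ε τ : Fin P → ℝ) (hε : ∀ i, 0 < ε i) (hτ : ∀ i, 0 < τ i) :
    haveI : NeZero P := ⟨by omega⟩
    let φ : ℝ → ℝ := fun l =>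
      (∑ i, (τ i / T) * max (Real.log (T * ε i / (τ i * l))) 0) - 1
    ContinuousOn φ (Set.Ioi 0) ∧
    StrictAntiOn φ {l : ℝ | 0 < l ∧ 0 < φ l} ∧
    Tendsto φ (nhdsWithin 0 (Set.Ioi 0)) atTop ∧
    (∀ l : ℝ, (Finset.univ.sup' (Finset.univ_nonempty) fun i => T * ε i / τ i) ≤ l →
      φ l = -1) ∧
    ∃! l : ℝ, 0 < l ∧ φ l = 0 := by
  haveI : NeZero P := ⟨by omega⟩
  intro φ
  have hratio : ∀ i, ∀ l : ℝ, 0 < l → 0 < T * ε i / (τ i * l) := fun i l hl =>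
    div_pos (mul_pos hT (hε i)) (mul_pos (hτ i) hl)
  -- continuity
  have hcont : ContinuousOn φ (Set.Ioi 0) := by
    apply ContinuousOn.sub _ continuousOn_const
    apply continuousOn_finset_sum
    intro i _
    have hlog : ContinuousOn (fun l : ℝ => Real.log (T * ε i / (τ i * l))) (Set.Ioi 0) :=
      ContinuousOn.log
        (continuousOn_const.div (continuousOn_const.mul continuousOn_id)
          (fun x hx => (mul_pos (hτ i) hx).ne'))
        (fun x hx => (hratio i x hx).ne')
    exact continuousOn_const.mul ((continuous_id.max continuous_const).comp_continuousOn hlog)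
  -- key strict decrease lemma
  have key : ∀ a b : ℝ, 0 < a → a < b →
      (∃ i, 0 < Real.log (T * ε i / (τ i * b))) → φ b < φ a := by
    rintro a b ha hab ⟨j, hj⟩
    have hsum : (∑ i, (τ i / T) * max (Real.log (T * ε i / (τ i * b))) 0) <
        ∑ i, (τ i / T) * max (Real.log (T * ε i / (τ i * a))) 0 := by
      apply Finset.sum_lt_sum
      · intro i _
        apply mul_le_mul_of_nonneg_left _ (le_of_lt (div_pos (hτ i) hT))
        apply max_le_max _ le_rfl
        apply Real.log_le_log (hratio i b (ha.trans hab))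
        apply div_le_div_of_nonneg_left (le_of_lt (mul_pos hT (hε i)))
          (mul_pos (hτ i) ha)
        exact mul_le_mul_of_nonneg_left hab.le (hτ i).le
      · refine ⟨j, Finset.mem_univ j, ?_⟩
        apply mul_lt_mul_of_pos_left _ (div_pos (hτ j) hT)
        have hlt : Real.log (T * ε j / (τ j * b)) < Real.log (T * ε j / (τ j * a)) := by
          apply Real.log_lt_log (hratio j b (ha.trans hab))
          apply div_lt_div_of_pos_left (mul_pos hT (hε j)) (mul_pos (hτ j) ha)
          exact mul_lt_mul_of_pos_left hab (hτ j)
        calc max (Real.log (T * ε j / (τ j * b))) 0 = Real.log (T * ε j / (τ j * b)) :=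
              max_eq_left hj.le
          _ < Real.log (T * ε j / (τ j * a)) := hlt
          _ ≤ max (Real.log (T * ε j / (τ j * a))) 0 := le_max_left _ _
    simpa [φ] using sub_lt_sub_right hsum 1
  -- existence of a positive term when φ ≥ 0
  have pos_term : ∀ b : ℝ, 0 < b → 0 ≤ φ b →
      ∃ i, 0 < Real.log (T * ε i / (τ i * b)) := by
    intro b hb hφb
    have hsum : (0:ℝ) < ∑ i, (τ i / T) * max (Real.log (T * ε i / (τ i * b))) 0 := by
      have : (1:ℝ) ≤ ∑ i, (τ i / T) * max (Real.log (T * ε i / (τ i * b))) 0 := by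
        have := hφb; simp only [φ] at this; linarith
      linarith
    have hsum' : ∑ _i : Fin P, (0:ℝ) <
        ∑ i, (τ i / T) * max (Real.log (T * ε i / (τ i * b))) 0 := by simpa using hsum
    obtain ⟨i, -, hi⟩ := Finset.exists_lt_of_sum_lt hsum'
    refine ⟨i, ?_⟩
    by_contra h
    push_neg at h
    rw [max_eq_right h] at hi
    simp at hi
  -- strict antitone
  have hanti : StrictAntiOn φ {l : ℝ | 0 < l ∧ 0 < φ l} := by
    rintro a ⟨ha, -⟩ b ⟨hb, hφb⟩ hab
    exact key a b ha hab (pos_term b hb hφb.le)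
  -- tendsto atTop
  set i0 : Fin P := ⟨0, by omega⟩
  have htop : Tendsto φ (nhdsWithin 0 (Set.Ioi 0)) atTop := by
    set K : ℝ := Real.log (T * ε i0 / τ i0)
    have hψ : Tendsto (fun l : ℝ => (τ i0 / T) * (K - Real.log l) - 1)
        (nhdsWithin 0 (Set.Ioi 0)) atTop := by
      have h1 : Tendsto Real.log (nhdsWithin 0 (Set.Ioi 0)) atBot :=
        Real.tendsto_log_nhdsGT_zero
      have h2 : Tendsto (fun l : ℝ => K - Real.log l) (nhdsWithin 0 (Set.Ioi 0)) atTop :=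
        tendsto_atTop_add_const_left _ K (tendsto_neg_atBot_atTop.comp h1)
      have h3 := h2.const_mul_atTop (div_pos (hτ i0) hT)
      exact tendsto_atTop_add_const_right _ (-1) h3
    apply tendsto_atTop_mono' _ _ hψ
    filter_upwards [self_mem_nhdsWithin] with l hl
    have hl : (0:ℝ) < l := hl
    have heq : K - Real.log l = Real.log (T * ε i0 / (τ i0 * l)) := by
      rw [show T * ε i0 / (τ i0 * l) = (T * ε i0 / τ i0) / l by ring,
        Real.log_div (div_pos (mul_pos hT (hε i0)) (hτ i0)).ne' hl.ne']
    rw [heq]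
    have h4 : (τ i0 / T) * Real.log (T * ε i0 / (τ i0 * l)) ≤
        (τ i0 / T) * max (Real.log (T * ε i0 / (τ i0 * l))) 0 :=
      mul_le_mul_of_nonneg_left (le_max_left _ _) (div_pos (hτ i0) hT).le
    have h5 : (τ i0 / T) * max (Real.log (T * ε i0 / (τ i0 * l))) 0 ≤
        ∑ i, (τ i / T) * max (Real.log (T * ε i / (τ i * l))) 0 :=
      Finset.single_le_sum
        (f := fun i => (τ i / T) * max (Real.log (T * ε i / (τ i * l))) 0)
        (fun i _ => mul_nonneg (div_pos (hτ i) hT).le (le_max_right _ _))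
        (Finset.mem_univ i0)
    simp only [φ]
    linarith
  -- value -1 beyond the max
  have hflat : ∀ l : ℝ,
      (Finset.univ.sup' (Finset.univ_nonempty) fun i => T * ε i / τ i) ≤ l → φ l = -1 := by
    intro l hl
    have hzero : ∀ i : Fin P, max (Real.log (T * ε i / (τ i * l))) 0 = 0 := by
      intro i
      have hi : T * ε i / τ i ≤ l :=
        le_trans (Finset.le_sup' (fun i => T * ε i / τ i) (Finset.mem_univ i)) hl
      have hlpos : 0 < l := lt_of_lt_of_le (div_pos (mul_pos hT (hε i)) (hτ i)) hi
      have hle1 : T * ε i / (τ i * l) ≤ 1 := by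
        rw [div_le_one (mul_pos (hτ i) hlpos)]
        calc T * ε i = (T * ε i / τ i) * τ i := (div_mul_cancel₀ _ (hτ i).ne').symm
          _ ≤ l * τ i := mul_le_mul_of_nonneg_right hi (hτ i).le
          _ = τ i * l := by ring
      exact max_eq_right (Real.log_nonpos (hratio i l hlpos).le hle1)
    simp only [φ, hzero, mul_zero, Finset.sum_const_zero, zero_sub]
  refine ⟨hcont, hanti, htop, hflat, ?_⟩
  -- existence and uniqueness of the zero
  set M : ℝ := Finset.univ.sup' (Finset.univ_nonempty) fun i => T * ε i / τ i with hM
  have hMpos : 0 < M :=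
    lt_of_lt_of_le (div_pos (mul_pos hT (hε i0)) (hτ i0))
      (Finset.le_sup' (fun i => T * ε i / τ i) (Finset.mem_univ i0))
  have hφM : φ M = -1 := hflat M le_rfl
  -- find δ ∈ (0, M) with φ δ > 0
  have hev : ∀ᶠ l in nhdsWithin 0 (Set.Ioi 0), 0 < φ l ∧ 0 < l ∧ l < M := by
    filter_upwards [htop.eventually_gt_atTop 0, self_mem_nhdsWithin,
      eventually_nhdsWithin_of_eventually_nhds (Filter.Tendsto.eventually_lt_const hMpos
        (tendsto_id (α := ℝ)))] with l h1 h2 h3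
    exact ⟨h1, h2, h3⟩
  obtain ⟨δ, hφδ, hδ0, hδM⟩ := hev.exists
  have hIcc : Set.Icc δ M ⊆ Set.Ioi 0 := fun x hx => lt_of_lt_of_le hδ0 hx.1
  have hivt := intermediate_value_Icc' hδM.le (hcont.mono hIcc)
  have h0mem : (0:ℝ) ∈ Set.Icc (φ M) (φ δ) := by
    rw [hφM]; exact ⟨by linarith, hφδ.le⟩
  obtain ⟨c, hcmem, hφc⟩ := hivt h0mem
  refine ⟨c, ⟨lt_of_lt_of_le hδ0 hcmem.1, hφc⟩, ?_⟩
  rintro d ⟨hd0, hφd⟩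
  have hc0 : 0 < c := lt_of_lt_of_le hδ0 hcmem.1
  rcases lt_trichotomy d c with h | h | h
  · exfalso
    have := key d c hd0 h (pos_term c hc0 hφc.ge)
    rw [hφc, hφd] at this; exact lt_irrefl 0 this
  · exact h
  · exfalso
    have := key c d hc0 h (pos_term d hd0 hφd.ge)
    rw [hφc, hφd] at this; exact lt_irrefl 0 this
end

section
/- Let λ* be the unique positive solution of Σ_i (τ_i/T)⌊ln(T ε_i/(τ_i λ))⌋⁺ = 1, let I = {i : λ* < T ε_i/τ_i}, and define t_i = τ_i ln(T ε_i/(τ_i λ*)) for i ∈ I and t_i = 0 otherwise. Then t is a feasible point: t_i ≥ 0 for all i and Σ_i t_i = T. -/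
open Real

/-- If `λ*` solves the water-filling equation `Σ_i (τ_i/T)⌊ln(T ε_i/(τ_i λ*))⌋⁺ = 1`,
then the allocation `t_i = τ_i ln(T ε_i/(τ_i λ*))` for active `i` (those with
`λ* < T ε_i/τ_i`) and `t_i = 0` otherwise is feasible: `t_i ≥ 0` and `Σ t_i = T`. -/
theorem stmt7 (P : ℕ) (hP : 1 ≤ P) (T : ℝ) (hT : 0 < T)
    (ε τ : Fin P → ℝ) (hε : ∀ i, 0 < ε i) (hτ : ∀ i, 0 < τ i)
    (l : ℝ) (hl : 0 < l)
    (hsol : ∑ i, (τ i / T) * max (Real.log (T * ε i / (τ i * l))) 0 = 1) :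
    let t : Fin P → ℝ := fun i =>
      if l < T * ε i / τ i then τ i * Real.log (T * ε i / (τ i * l)) else 0
    (∀ i, 0 ≤ t i) ∧ ∑ i, t i = T := by
  intro t
  have key : ∀ i, t i = τ i * max (Real.log (T * ε i / (τ i * l))) 0 := by
    intro i
    have hτi := hτ i
    have hεi := hε i
    have hpos : 0 < τ i * l := mul_pos hτi hl
    show (if l < T * ε i / τ i then τ i * Real.log (T * ε i / (τ i * l)) else 0)
        = τ i * max (Real.log (T * ε i / (τ i * l))) 0
    by_cases h : l < T * ε i / τ i
    · have h1 : 1 < T * ε i / (τ i * l) := by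
        rw [lt_div_iff₀ hpos]
        have := (lt_div_iff₀ hτi).mp h
        linarith [this]
      have hlog : 0 < Real.log (T * ε i / (τ i * l)) := Real.log_pos h1
      rw [if_pos h, max_eq_left hlog.le]
    · have h1 : T * ε i / (τ i * l) ≤ 1 := by
        rw [div_le_one hpos]
        have : T * ε i / τ i ≤ l := le_of_not_gt h
        have := (div_le_iff₀ hτi).mp this
        linarith [this]
      have hlog : Real.log (T * ε i / (τ i * l)) ≤ 0 :=
        Real.log_nonpos (by positivity) h1
      rw [if_neg h, max_eq_right hlog, mul_zero]
  constructor
  · intro i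
    rw [key i]
    exact mul_nonneg (hτ i).le (le_max_right _ _)
  · have : ∑ i, t i = ∑ i, T * ((τ i / T) * max (Real.log (T * ε i / (τ i * l))) 0) := by
      apply Finset.sum_congr rfl
      intro i _
      rw [key i]
      field_simp
    rw [this, ← Finset.mul_sum, hsol, mul_one]
end

section
/- Suppose every index is active, i.e. λ* < T ε_i/τ_i for all i. Then the optimal allocation has the closed form t_i = ( Σ_{j=1}^P τ_j ln(ε_i τ_j/(ε_j τ_i)) + T ) / ( Σ_{j=1}^P τ_j/τ_i ), and these t_i satisfy Σ_i t_i = T. -/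
open Real

/-- When every index is active (`λ* < T ε_i/τ_i` for all `i`), the optimal allocation
`t_i = τ_i ln(T ε_i/(τ_i λ*))` has the closed form
`t_i = (Σ_j τ_j ln(ε_i τ_j/(ε_j τ_i)) + T)/(Σ_j τ_j/τ_i)`, and these sum to `T`. -/
theorem stmt9 (P : ℕ) (hP : 1 ≤ P) (T : ℝ) (hT : 0 < T)
    (ε τ : Fin P → ℝ) (hε : ∀ i, 0 < ε i) (hτ : ∀ i, 0 < τ i)
    (l : ℝ) (hl : 0 < l)
    (hsol : ∑ i, (τ i / T) * max (Real.log (T * ε i / (τ i * l))) 0 = 1)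
    (hactive : ∀ i, l < T * ε i / τ i) :
    let u : Fin P → ℝ := fun i =>
      ((∑ j, τ j * Real.log (ε i * τ j / (ε j * τ i))) + T) / (∑ j, τ j / τ i)
    (∀ i, τ i * Real.log (T * ε i / (τ i * l)) = u i) ∧ ∑ i, u i = T := by
  intro u
  set L : Fin P → ℝ := fun i => Real.log (T * ε i / (τ i * l)) with hLdef
  have hS : 0 < ∑ j, τ j :=
    Finset.sum_pos (fun j _ => hτ j) ⟨⟨0, hP⟩, Finset.mem_univ _⟩
  have hLpos : ∀ i, 0 < L i := by
    intro i
    apply Real.log_pos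
    have h1 : T * ε i / (τ i * l) = (T * ε i / τ i) / l := by
      rw [div_div]
    rw [h1, lt_div_iff₀ hl, one_mul]
    exact hactive i
  have hsum : ∑ i, τ i * L i = T := by
    have h1 : ∑ i, (τ i / T) * max (L i) 0 = ∑ i, (τ i * L i) / T := by
      apply Finset.sum_congr rfl
      intro i _
      rw [max_eq_left (hLpos i).le]
      ring
    rw [h1, ← Finset.sum_div, div_eq_one_iff_eq hT.ne'] at hsol
    exact hsol
  have key : ∀ i j, Real.log (ε i * τ j / (ε j * τ i)) = L i - L j := by
    intro i j
    have hT' : T ≠ 0 := hT.ne'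
    have hl' : l ≠ 0 := hl.ne'
    have hτi : τ i ≠ 0 := (hτ i).ne'
    have hτj : τ j ≠ 0 := (hτ j).ne'
    have hεj : ε j ≠ 0 := (hε j).ne'
    have hεi := hε i
    have hτi' := hτ i
    have hτj' := hτ j
    have hεj' := hε j
    have heq : ε i * τ j / (ε j * τ i) = (T * ε i / (τ i * l)) / (T * ε j / (τ j * l)) := by
      field_simp
    have hne1 : T * ε i / (τ i * l) ≠ 0 := by positivity
    have hne2 : T * ε j / (τ j * l) ≠ 0 := ne_of_gt (by positivity)
    rw [heq, Real.log_div hne1 hne2]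
  have hdenom : ∀ i, ∑ j, τ j / τ i = (∑ j, τ j) / τ i := by
    intro i; rw [Finset.sum_div]
  have hui : ∀ i, u i = τ i * L i := by
    intro i
    have hnum : (∑ j, τ j * Real.log (ε i * τ j / (ε j * τ i))) = (∑ j, τ j) * L i - T := by
      have : ∀ j ∈ Finset.univ, τ j * Real.log (ε i * τ j / (ε j * τ i))
          = τ j * L i - τ j * L j := by
        intro j _; rw [key i j]; ring
      rw [Finset.sum_congr rfl this, Finset.sum_sub_distrib, ← Finset.sum_mul, hsum]
    show ((∑ j, τ j * Real.log (ε i * τ j / (ε j * τ i))) + T) / (∑ j, τ j / τ i) = τ i * L i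
    rw [hnum, hdenom i]
    field_simp
    ring
  refine ⟨fun i => (hui i).symm, ?_⟩
  calc ∑ i, u i = ∑ i, τ i * L i := Finset.sum_congr rfl (fun i _ => hui i)
    _ = T := hsum
end

section
/- In the all-active closed-form allocation t_i = (Σ_j τ_j ln(ε_i τ_j/(ε_j τ_i)) + T)/(Σ_j τ_j/τ_i), the quantity (ε_i/τ_i) e^{-t_i/τ_i} is the same for all indices i (equalization of marginal detection gains). -/
open Real

/-- In the all-active closed-form allocation
`t_i = (Σ_j τ_j ln(ε_i τ_j/(ε_j τ_i)) + T)/(Σ_j τ_j/τ_i)`, the marginal gain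
`(ε_i/τ_i) e^{-t_i/τ_i}` is the same for all indices. -/
theorem stmt10 (P : ℕ) (hP : 1 ≤ P) (T : ℝ) (hT : 0 < T)
    (ε τ : Fin P → ℝ) (hε : ∀ i, 0 < ε i) (hτ : ∀ i, 0 < τ i) :
    let t : Fin P → ℝ := fun i =>
      ((∑ j, τ j * Real.log (ε i * τ j / (ε j * τ i))) + T) / (∑ j, τ j / τ i)
    ∀ i j : Fin P,
      (ε i / τ i) * Real.exp (-t i / τ i) = (ε j / τ j) * Real.exp (-t j / τ j) := by
  intro t
  have hFin : Nonempty (Fin P) := ⟨⟨0, hP⟩⟩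
  have hS : 0 < ∑ j, τ j := Finset.sum_pos (fun j _ => hτ j) Finset.univ_nonempty
  have key : ∀ i, (ε i / τ i) * Real.exp (-t i / τ i)
      = Real.exp (-(((∑ j, τ j * Real.log (τ j / ε j)) + T) / (∑ j, τ j))) := by
    intro i
    have hsum : (∑ j, τ j * Real.log (ε i * τ j / (ε j * τ i)))
        = (∑ j, τ j) * Real.log (ε i / τ i) + ∑ j, τ j * Real.log (τ j / ε j) := by
      rw [Finset.sum_mul, ← Finset.sum_add_distrib]
      apply Finset.sum_congr rfl
      intro j _
      have h1 : ε i * τ j / (ε j * τ i) = (ε i / τ i) * (τ j / ε j) := by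
        field_simp
      rw [h1, Real.log_mul (ne_of_gt (div_pos (hε i) (hτ i)))
        (ne_of_gt (div_pos (hτ j) (hε j))), mul_add]
    have hdiv : (∑ j, τ j / τ i) = (∑ j, τ j) / τ i := by
      rw [Finset.sum_div]
    have hti : t i / τ i = Real.log (ε i / τ i)
        + ((∑ j, τ j * Real.log (τ j / ε j)) + T) / (∑ j, τ j) := by
      show (((∑ j, τ j * Real.log (ε i * τ j / (ε j * τ i))) + T) / (∑ j, τ j / τ i)) / τ i = _
      rw [hsum, hdiv, div_div, div_mul_cancel₀ _ (ne_of_gt (hτ i)), add_assoc,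
        add_div, mul_div_cancel_left₀ _ (ne_of_gt hS)]
    have hL : Real.exp (Real.log (ε i / τ i)) = ε i / τ i :=
      Real.exp_log (div_pos (hε i) (hτ i))
    rw [neg_div, hti, neg_add, Real.exp_add, Real.exp_neg, hL, ← mul_assoc,
      mul_inv_cancel₀ (ne_of_gt (div_pos (hε i) (hτ i))), one_mul]
  intro i j
  rw [key i, key j]
end

section
/- Increasing the weight ε_k of a single target (holding other weights, the τ_i's and T fixed) does not decrease the optimal allocated time t_k for that target. -/
open Real

lemma exp_mid_le (τ x y : ℝ) : Real.exp (-((x + y) / 2) / τ) ≤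
    (Real.exp (-x / τ) + Real.exp (-y / τ)) / 2 := by
  have h := convexOn_exp.2 (Set.mem_univ (-x / τ)) (Set.mem_univ (-y / τ))
    (by norm_num : (0:ℝ) ≤ 1/2) (by norm_num : (0:ℝ) ≤ 1/2) (by norm_num)
  have he : -((x + y) / 2) / τ = (1/2 : ℝ) • (-x / τ) + (1/2 : ℝ) • (-y / τ) := by
    simp [smul_eq_mul]; ring
  rw [he]
  simp only [smul_eq_mul] at h ⊢
  linarith

lemma exp_mid_lt (τ x y : ℝ) (hτ : 0 < τ) (hxy : x ≠ y) :
    Real.exp (-((x + y) / 2) / τ) <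
    (Real.exp (-x / τ) + Real.exp (-y / τ)) / 2 := by
  have hne : -x / τ ≠ -y / τ := by
    intro h
    apply hxy
    field_simp at h
    linarith
  have h := strictConvexOn_exp.2 (Set.mem_univ (-x / τ)) (Set.mem_univ (-y / τ)) hne
    (by norm_num : (0:ℝ) < 1/2) (by norm_num : (0:ℝ) < 1/2) (by norm_num)
  have he : -((x + y) / 2) / τ = (1/2 : ℝ) • (-x / τ) + (1/2 : ℝ) • (-y / τ) := by
    simp [smul_eq_mul]; ring
  rw [he]
  simp only [smul_eq_mul] at h ⊢
  linarith

/-- Monotone comparative statics: increasing the weight `ε_k` of a single target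
(holding the other weights, the `τ_i` and `T` fixed) does not decrease the optimal
time allocated to that target. -/
theorem stmt12 (P : ℕ) (hP : 1 ≤ P) (T : ℝ) (hT : 0 < T)
    (ε ε' τ : Fin P → ℝ) (hε : ∀ i, 0 < ε i) (hε' : ∀ i, 0 < ε' i)
    (hτ : ∀ i, 0 < τ i) (k : Fin P)
    (hk : ε k ≤ ε' k) (hother : ∀ i, i ≠ k → ε' i = ε i)
    (t t' : Fin P → ℝ)
    (htfeas : (∀ i, 0 ≤ t i) ∧ ∑ i, t i = T)
    (ht'feas : (∀ i, 0 ≤ t' i) ∧ ∑ i, t' i = T)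
    (htmax : ∀ s : Fin P → ℝ, (∀ i, 0 ≤ s i) ∧ ∑ i, s i = T →
      ∑ i, ε i * (1 - Real.exp (-s i / τ i)) ≤
        ∑ i, ε i * (1 - Real.exp (-t i / τ i)))
    (ht'max : ∀ s : Fin P → ℝ, (∀ i, 0 ≤ s i) ∧ ∑ i, s i = T →
      ∑ i, ε' i * (1 - Real.exp (-s i / τ i)) ≤
        ∑ i, ε' i * (1 - Real.exp (-t' i / τ i))) :
    t k ≤ t' k := by
  obtain ⟨ht0, htsum⟩ := htfeas
  obtain ⟨ht'0, ht'sum⟩ := ht'feas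
  rcases eq_or_lt_of_le hk with heq | hlt
  · -- equal weights: the objectives coincide; use strict concavity at the midpoint
    have hε'eq : ε' = ε := funext fun i => by
      by_cases h : i = k
      · rw [h]; exact heq.symm
      · exact hother i h
    subst hε'eq
    by_contra hc
    push_neg at hc
    have hne : t k ≠ t' k := hc.ne'
    have h1 := htmax t' ⟨ht'0, ht'sum⟩
    have h2 := ht'max t ⟨ht0, htsum⟩
    have hVeq : ∑ i, ε' i * (1 - Real.exp (-t' i / τ i)) =
        ∑ i, ε' i * (1 - Real.exp (-t i / τ i)) := le_antisymm h1 h2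
    set s : Fin P → ℝ := fun i => (t i + t' i) / 2 with hs
    have hsfeas : (∀ i, 0 ≤ s i) ∧ ∑ i, s i = T := by
      constructor
      · intro i; have := ht0 i; have := ht'0 i; simp only [hs]; linarith
      · simp only [hs]
        rw [← Finset.sum_div, Finset.sum_add_distrib, htsum, ht'sum]
        ring
    have hstrict : ∑ i, ε' i * (((1 - Real.exp (-t i / τ i)) +
        (1 - Real.exp (-t' i / τ i))) / 2) <
        ∑ i, ε' i * (1 - Real.exp (-s i / τ i)) := by
      apply Finset.sum_lt_sum
      · intro i _
        apply mul_le_mul_of_nonneg_left _ (hε' i).le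
        have := exp_mid_le (τ i) (t i) (t' i)
        simp only [hs]; linarith
      · refine ⟨k, Finset.mem_univ k, ?_⟩
        apply mul_lt_mul_of_pos_left _ (hε' k)
        have := exp_mid_lt (τ k) (t k) (t' k) (hτ k) hne
        simp only [hs]; linarith
    have hlhs : ∑ i, ε' i * (((1 - Real.exp (-t i / τ i)) +
        (1 - Real.exp (-t' i / τ i))) / 2) =
        (∑ i, ε' i * (1 - Real.exp (-t i / τ i)) +
         ∑ i, ε' i * (1 - Real.exp (-t' i / τ i))) / 2 := by
      rw [← Finset.sum_add_distrib, Finset.sum_div]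
      apply Finset.sum_congr rfl
      intros; ring
    have hmax := htmax s hsfeas
    rw [hlhs, hVeq] at hstrict
    linarith
  · -- strictly larger weight: cross the two optimality inequalities
    have h1 := htmax t' ⟨ht'0, ht'sum⟩
    have h2 := ht'max t ⟨ht0, htsum⟩
    have ck : ∀ f : Fin P → ℝ, ∑ i, (ε' i - ε i) * f i = (ε' k - ε k) * f k := by
      intro f
      apply Finset.sum_eq_single_of_mem k (Finset.mem_univ k)
      intro i _ hi
      rw [hother i hi]; ring
    have hsum : (ε' k - ε k) * (1 - Real.exp (-t k / τ k)) ≤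
        (ε' k - ε k) * (1 - Real.exp (-t' k / τ k)) := by
      rw [← ck (fun i => 1 - Real.exp (-t i / τ i)),
          ← ck (fun i => 1 - Real.exp (-t' i / τ i))]
      simp only [sub_mul, Finset.sum_sub_distrib]
      linarith
    have hg : 1 - Real.exp (-t k / τ k) ≤ 1 - Real.exp (-t' k / τ k) :=
      le_of_mul_le_mul_left hsum (sub_pos.mpr hlt)
    have hexp : Real.exp (-t' k / τ k) ≤ Real.exp (-t k / τ k) := by linarith
    have := Real.exp_le_exp.mp hexp
    have hτk := hτ k
    rw [div_le_div_iff₀ hτk hτk] at this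
    nlinarith
end

section
/- Let n > 0. The equation (1 - e^{-γ}) ln(1 - e^{-γ}) + n γ e^{-γ} = 0 has a unique solution γ > 0. -/
open Real

-- key inequality: u - 1 < u log u for u in (0,1)
lemma key1 {u : ℝ} (hu0 : 0 < u) (hu1 : u < 1) : u - 1 < u * Real.log u := by
  have h := Real.log_lt_sub_one_of_pos (inv_pos.mpr hu0) (by
    simp only [ne_eq, inv_eq_one]; exact ne_of_lt hu1)
  rw [Real.log_inv] at h
  have hinv : u * u⁻¹ = 1 := mul_inv_cancel₀ hu0.ne'
  nlinarith [mul_lt_mul_of_pos_left h hu0]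

-- -log v ≤ (1-v)/v for v > 0
lemma key2 {v : ℝ} (hv0 : 0 < v) : -Real.log v ≤ (1 - v) / v := by
  have h := Real.log_le_sub_one_of_pos (inv_pos.mpr hv0)
  rw [Real.log_inv] at h
  have : (1 - v) / v = v⁻¹ - 1 := by field_simp
  linarith

lemma hv_pos {γ : ℝ} (hγ : 0 < γ) : 0 < 1 - Real.exp (-γ) := by
  have : Real.exp (-γ) < 1 := by rw [Real.exp_lt_one_iff]; linarith
  linarith

lemma hasDerivLog {γ : ℝ} (hγ : 0 < γ) :
    HasDerivAt (fun x => Real.log (1 - Real.exp (-x)))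
      (Real.exp (-γ) / (1 - Real.exp (-γ))) γ := by
  have h2 : HasDerivAt (fun x => 1 - Real.exp (-x)) (Real.exp (-γ)) γ := by
    have h := ((Real.hasDerivAt_exp (-γ)).comp γ (hasDerivAt_neg γ)).const_sub 1
    refine h.congr_deriv ?_; ring
  exact h2.log (hv_pos hγ).ne'

lemma hasDerivH (n : ℝ) {γ : ℝ} (hγ : 0 < γ) :
    HasDerivAt (fun x => (Real.exp x - 1) * Real.log (1 - Real.exp (-x)) + n * x)
      (Real.exp γ * Real.log (1 - Real.exp (-γ)) + 1 + n) γ := by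
  have h1 : HasDerivAt (fun x => Real.exp x - 1) (Real.exp γ) γ :=
    (Real.hasDerivAt_exp γ).sub_const 1
  have h4 := (h1.mul (hasDerivLog hγ)).add ((hasDerivAt_id γ).const_mul n)
  refine h4.congr_deriv ?_
  have hv := hv_pos hγ
  have he : Real.exp γ * Real.exp (-γ) = 1 := by
    rw [← Real.exp_add]; simp
  field_simp
  nlinarith [hv]

lemma hasDerivG {γ : ℝ} (hγ : 0 < γ) :
    HasDerivAt (fun x => Real.exp x * Real.log (1 - Real.exp (-x)))
      (Real.exp γ * Real.log (1 - Real.exp (-γ)) + 1 / (1 - Real.exp (-γ))) γ := by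
  have h4 := (Real.hasDerivAt_exp γ).mul (hasDerivLog hγ)
  refine h4.congr_deriv ?_
  have hv := hv_pos hγ
  have he : Real.exp γ * Real.exp (-γ) = 1 := by
    rw [← Real.exp_add]; simp
  field_simp
  nlinarith [hv]

lemma gderiv_pos {γ : ℝ} (hγ : 0 < γ) :
    0 < Real.exp γ * Real.log (1 - Real.exp (-γ)) + 1 / (1 - Real.exp (-γ)) := by
  set u := Real.exp (-γ) with hudef
  have hu0 : 0 < u := Real.exp_pos _
  have hu1 : u < 1 := by rw [hudef, Real.exp_lt_one_iff]; linarith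
  set v := 1 - u with hvdef
  have hv0 : 0 < v := by linarith
  have hv1 : v < 1 := by linarith
  have hexpa : Real.exp γ = u⁻¹ := by
    rw [hudef, ← Real.exp_neg]; simp
  rw [hexpa]
  have hrw : u⁻¹ * Real.log v + 1 / v = (v * Real.log v + u) / (u * v) := by
    field_simp
  rw [hrw]
  have hk := key1 hv0 hv1
  exact div_pos (by linarith) (mul_pos hu0 hv0)

lemma gmono {a : ℝ} (ha : 0 < a) :
    StrictMonoOn (fun x => Real.exp x * Real.log (1 - Real.exp (-x))) (Set.Ici a) := by
  apply strictMonoOn_of_deriv_pos (convex_Ici a)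
  · exact fun x hx => (hasDerivG (ha.trans_le hx)).continuousAt.continuousWithinAt
  · intro x hx
    rw [interior_Ici] at hx
    rw [(hasDerivG (ha.trans hx)).deriv]
    exact gderiv_pos (ha.trans hx)

lemma deriv_pos_at_root (n : ℝ) {a : ℝ} (ha : 0 < a)
    (hroot : (Real.exp a - 1) * Real.log (1 - Real.exp (-a)) + n * a = 0) :
    0 < Real.exp a * Real.log (1 - Real.exp (-a)) + 1 + n := by
  set u := Real.exp (-a) with hudef
  have hu0 : 0 < u := Real.exp_pos _
  have hu1 : u < 1 := by rw [hudef, Real.exp_lt_one_iff]; linarith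
  set v := 1 - u with hvdef
  have hv0 : 0 < v := by linarith
  have hv1 : v < 1 := by linarith
  have hloga : Real.log u = -a := by rw [hudef]; exact Real.log_exp _
  have hexpa : Real.exp a = u⁻¹ := by rw [hudef, ← Real.exp_neg]; simp
  set L := Real.log v with hLdef
  rw [hexpa] at hroot ⊢
  have huinv : u⁻¹ * u = 1 := inv_mul_cancel₀ hu0.ne'
  -- root equation: v * L = -(n * a * u)
  have hvL : v * L = -(n * a * u) := by
    have h := hroot
    have h2 : ((u⁻¹ - 1) * L + n * a) * u = 0 := by rw [h]; ring
    have : (u⁻¹ * u) * L - u * L + n * a * u = 0 := by ring_nf; ring_nf at h2; linarith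
    rw [huinv] at this
    rw [hvdef]; linarith
  -- C := a - v > 0
  have hC : 0 < a - v := by
    have h := Real.log_lt_sub_one_of_pos hu0 hu1.ne
    rw [hloga] at h
    rw [hvdef]; linarith
  -- A := -L ≤ u / v
  have hA : -L ≤ u / v := by
    have := key2 hv0
    have hu : u = 1 - v := by rw [hvdef]; ring
    rw [hLdef, hu]
    exact this
  -- C < a * v
  have hCav : a - v < a * v := by
    have hk := key1 hu0 hu1
    rw [hloga] at hk
    rw [hvdef]; nlinarith
  -- (-L) * (a - v) < a * u
  have hfinal : (-L) * (a - v) < a * u := by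
    calc (-L) * (a - v) ≤ (u / v) * (a - v) := by
          exact mul_le_mul_of_nonneg_right hA hC.le
      _ < (u / v) * (a * v) := by
          exact mul_lt_mul_of_pos_left hCav (div_pos hu0 hv0)
      _ = a * u := by field_simp
  -- conclude
  have h5' : 0 < a * (L + u + n * u) := by nlinarith [hfinal, hvL]
  have h6 : 0 < L + u + n * u := by
    by_contra hcon
    push_neg at hcon
    nlinarith [h5', ha]
  have hrw : u⁻¹ * L + 1 + n = (L + u + n * u) / u := by field_simp
  rw [hrw]
  exact div_pos h6 hu0

lemma Hmono (n : ℝ) {a : ℝ} (ha : 0 < a)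
    (hroot : (Real.exp a - 1) * Real.log (1 - Real.exp (-a)) + n * a = 0) :
    StrictMonoOn (fun x => (Real.exp x - 1) * Real.log (1 - Real.exp (-x)) + n * x)
      (Set.Ici a) := by
  apply strictMonoOn_of_deriv_pos (convex_Ici a)
  · exact fun x hx => (hasDerivH n (ha.trans_le hx)).continuousAt.continuousWithinAt
  · intro x hx
    rw [interior_Ici] at hx
    rw [(hasDerivH n (ha.trans hx)).deriv]
    have h1 := deriv_pos_at_root n ha hroot
    have h2 := gmono ha (Set.self_mem_Ici) (Set.mem_Ici.mpr hx.le) hx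
    simp only at h2
    linarith

lemma Hneg (n : ℝ) (hn : 0 < n) :
    (Real.exp (Real.exp (-(n+1))) - 1) * Real.log (1 - Real.exp (-(Real.exp (-(n+1))))) +
      n * Real.exp (-(n+1)) < 0 := by
  set γ := Real.exp (-(n+1)) with hγdef
  have hγ0 : 0 < γ := Real.exp_pos _
  have hγ1 : γ < 1 := by rw [hγdef, Real.exp_lt_one_iff]; linarith
  have hlog : Real.log γ = -(n+1) := by rw [hγdef]; exact Real.log_exp _
  have hv := hv_pos hγ0
  have h1 : 1 - Real.exp (-γ) < γ := by
    have := Real.add_one_lt_exp (x := -γ) (by linarith)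
    linarith
  have hL : Real.log (1 - Real.exp (-γ)) < -(n+1) := by
    rw [← hlog]; exact Real.log_lt_log hv h1
  have hLneg : Real.log (1 - Real.exp (-γ)) < 0 := by linarith
  have hE : γ ≤ Real.exp γ - 1 := by linarith [Real.add_one_le_exp γ]
  have h2 : (Real.exp γ - 1) * Real.log (1 - Real.exp (-γ)) ≤
      γ * Real.log (1 - Real.exp (-γ)) := mul_le_mul_of_nonpos_right hE hLneg.le
  nlinarith [mul_lt_mul_of_pos_left hL hγ0]

lemma Hpos (n : ℝ) (hn : 0 < n) :
    0 < (Real.exp (1/n + 1) - 1) * Real.log (1 - Real.exp (-(1/n + 1))) +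
      n * (1/n + 1) := by
  set γ := 1/n + 1 with hγdef
  have hγ0 : 0 < γ := by positivity
  have hv := hv_pos hγ0
  set u := Real.exp (-γ) with hudef
  have hu0 : 0 < u := Real.exp_pos _
  set v := 1 - u with hvdef
  have hexpa : Real.exp γ = u⁻¹ := by rw [hudef, ← Real.exp_neg]; simp
  have hA : -Real.log v ≤ u / v := by
    have := key2 (v := v) (by linarith)
    have hu : u = 1 - v := by rw [hvdef]; ring
    rw [hu]; exact this
  have hlb : (Real.exp γ - 1) * Real.log v ≥ -1 := by
    rw [hexpa]
    have hEv : u⁻¹ - 1 = v / u := by rw [hvdef]; field_simp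
    rw [hEv]
    have h3 : (v / u) * (-Real.log v) ≤ (v / u) * (u / v) :=
      mul_le_mul_of_nonneg_left hA (by positivity)
    have h4 : (v / u) * (u / v) = 1 := by field_simp
    nlinarith
  have hnγ : n * γ = 1 + n := by
    rw [hγdef]; field_simp
  nlinarith

lemma bridge (n γ : ℝ) :
    ((1 - Real.exp (-γ)) * Real.log (1 - Real.exp (-γ)) + n * γ * Real.exp (-γ)) *
        Real.exp γ =
      (Real.exp γ - 1) * Real.log (1 - Real.exp (-γ)) + n * γ := by
  have he : Real.exp γ * Real.exp (-γ) = 1 := by rw [← Real.exp_add]; simp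
  linear_combination (n * γ - Real.log (1 - Real.exp (-γ))) * he

lemma no_two (n : ℝ) {b c : ℝ} (hb : 0 < b) (hbc : b < c)
    (hrb : (Real.exp b - 1) * Real.log (1 - Real.exp (-b)) + n * b = 0)
    (hrc : (Real.exp c - 1) * Real.log (1 - Real.exp (-c)) + n * c = 0) : False := by
  have h := Hmono n hb hrb (Set.self_mem_Ici) (Set.mem_Ici.mpr hbc.le) hbc
  simp only at h
  rw [hrb, hrc] at h
  exact lt_irrefl 0 h

/-- For `n > 0`, the equation `(1 - e^{-γ}) ln(1 - e^{-γ}) + n γ e^{-γ} = 0` has a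
unique solution `γ > 0`. -/
theorem stmt15 (n : ℝ) (hn : 0 < n) :
    ∃! γ : ℝ, 0 < γ ∧
      (1 - Real.exp (-γ)) * Real.log (1 - Real.exp (-γ)) +
        n * γ * Real.exp (-γ) = 0 := by
  set H : ℝ → ℝ := fun x => (Real.exp x - 1) * Real.log (1 - Real.exp (-x)) + n * x
    with hHdef
  have hiff : ∀ γ : ℝ, ((1 - Real.exp (-γ)) * Real.log (1 - Real.exp (-γ)) +
      n * γ * Real.exp (-γ) = 0) ↔ H γ = 0 := by
    intro γ
    constructor
    · intro h
      rw [hHdef]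
      simp only
      rw [← bridge n γ, h, zero_mul]
    · intro h
      have hb := bridge n γ
      rw [hHdef] at h
      simp only at h
      rw [h] at hb
      rcases mul_eq_zero.mp hb with h' | h'
      · exact h'
      · exact absurd h' (Real.exp_ne_zero γ)
  -- existence
  set γ₀ := Real.exp (-(n+1)) with hγ₀def
  set γ₁ := 1/n + 1 with hγ₁def
  have hγ₀0 : 0 < γ₀ := Real.exp_pos _
  have hγ₀1 : γ₀ < 1 := by rw [hγ₀def, Real.exp_lt_one_iff]; linarith
  have hγ₀₁ : γ₀ ≤ γ₁ := by
    have h1n : (0:ℝ) < 1/n := by positivity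
    have : (1:ℝ) < γ₁ := by rw [hγ₁def]; linarith
    linarith
  have hcont : ContinuousOn H (Set.Icc γ₀ γ₁) := fun x hx =>
    (hasDerivH n (hγ₀0.trans_le hx.1)).continuousAt.continuousWithinAt
  have hmem : (0:ℝ) ∈ Set.Icc (H γ₀) (H γ₁) := by
    constructor
    · exact (Hneg n hn).le
    · exact (Hpos n hn).le
  obtain ⟨a, haIcc, haeq⟩ := intermediate_value_Icc hγ₀₁ hcont hmem
  have ha0 : 0 < a := hγ₀0.trans_le haIcc.1
  refine ⟨a, ⟨ha0, (hiff a).mpr haeq⟩, ?_⟩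
  -- uniqueness
  intro y ⟨hy0, hyeq⟩
  have hya : H y = 0 := (hiff y).mp hyeq
  by_contra hne
  rcases lt_or_gt_of_ne hne with h | h
  · exact no_two n hy0 h hya haeq
  · exact no_two n ha0 h haeq hya
end
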